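/- Let n ≥ 3, let a = x_0 < x_1 < ... < x_n = b be real numbers, and let f be twice continuously differentiable on [a, b]. Set h = max_{0 ≤ i ≤ n-1} (x_{i+1} - x_i) and λ = max_{1 ≤ i ≤ n-2} min{(x_{i+1} - x_i)/(x_i - x_{i-1}), (x_{i+1} - x_i)/(x_{i+2} - x_{i+1})}. Then for every x ∈ [a, b] with x ≠ x_i for all i: if n is odd, |r(x) - f(x)| ≤ h(1+λ)(b-a)·(max_{t∈[a,b]} |f''(t)|)/2; and if n is even, |r(x) - f(x)| ≤ h(1+λ)·((b-a)·(max_{t∈[a,b]} |f''(t)|)/2 + max_{t∈[a,b]} |f'(t)|). -/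

import Mathlib

open Finset Real

/-- Alternating sum of a decreasing nonnegative sequence is nonnegative. -/
lemma berrut_alt_sum_nonneg : ∀ (m : ℕ) (u : ℕ → ℝ),
    (∀ k, k + 1 ≤ m → u (k+1) ≤ u k) → (∀ k, k ≤ m → 0 ≤ u k) →
    0 ≤ ∑ k ∈ range (m+1), (-1:ℝ)^k * u k := by
  intro m
  induction m using Nat.strong_induction_on with
  | _ m ih =>
    intro u hdec hnn
    match m with
    | 0 => simpa using hnn 0 le_rfl
    | 1 =>
      rw [Finset.sum_range_succ, Finset.sum_range_one]
      have := hdec 0 le_rfl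
      simp only [pow_zero, pow_one, one_mul, neg_one_mul]
      linarith
    | (m+2) =>
      have key : ∑ k ∈ range (m+3), (-1:ℝ)^k * u k
          = (u 0 - u 1) + ∑ k ∈ range (m+1), (-1:ℝ)^k * u (k+2) := by
        rw [Finset.sum_range_succ' (fun k => (-1:ℝ)^k * u k) (m+2),
            Finset.sum_range_succ' (fun k => (-1:ℝ)^(k+1) * u (k+1)) (m+1)]
        simp only [pow_zero, one_mul, pow_one]
        have : ∀ k, (-1:ℝ)^(k+1+1) = (-1:ℝ)^k := by
          intro k; rw [pow_succ, pow_succ]; ring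
        rw [Finset.sum_congr rfl (fun k _ => by rw [this k])]
        ring
      rw [key]
      have h1 : 0 ≤ u 0 - u 1 := by have := hdec 0 (by omega); linarith
      have h2 : 0 ≤ ∑ k ∈ range (m+1), (-1:ℝ)^k * u (k+2) := by
        apply ih m (by omega)
        · intro k hk; exact hdec (k+2) (by omega)
        · intro k hk; exact hnn (k+2) (by omega)
      linarith

/-- Alternating sum lower bound: at least `u 0 - u 1`. -/
lemma berrut_alt_sum_ge (m : ℕ) (hm : 1 ≤ m) (u : ℕ → ℝ)
    (hdec : ∀ k, k + 1 ≤ m → u (k+1) ≤ u k) (hnn : ∀ k, k ≤ m → 0 ≤ u k) :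
    u 0 - u 1 ≤ ∑ k ∈ range (m+1), (-1:ℝ)^k * u k := by
  match m with
  | (m+1) =>
    match m with
    | 0 => simp [Finset.sum_range_succ]
    | (m+1) =>
      have key : ∑ k ∈ range (m+3), (-1:ℝ)^k * u k
          = (u 0 - u 1) + ∑ k ∈ range (m+1), (-1:ℝ)^k * u (k+2) := by
        rw [Finset.sum_range_succ' (fun k => (-1:ℝ)^k * u k) (m+2),
            Finset.sum_range_succ' (fun k => (-1:ℝ)^(k+1) * u (k+1)) (m+1)]
        simp only [pow_zero, one_mul, pow_one]
        have : ∀ k, (-1:ℝ)^(k+1+1) = (-1:ℝ)^k := by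
          intro k; rw [pow_succ, pow_succ]; ring
        rw [Finset.sum_congr rfl (fun k _ => by rw [this k])]
        ring
      rw [key]
      have h2 : 0 ≤ ∑ k ∈ range (m+1), (-1:ℝ)^k * u (k+2) := by
        apply berrut_alt_sum_nonneg m
        · intro k hk; exact hdec (k+2) (by omega)
        · intro k hk; exact hnn (k+2) (by omega)
      linarith

/-- Pairing an even-length sum. -/
lemma berrut_sum_pair (m : ℕ) (f : ℕ → ℝ) :
    ∑ i ∈ range (2*m), f i = ∑ k ∈ range m, (f (2*k) + f (2*k+1)) := by
  induction m with
  | zero => simp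
  | succ m ih =>
    have : 2*(m+1) = (2*m) + 1 + 1 := by ring
    rw [this, Finset.sum_range_succ, Finset.sum_range_succ, ih, Finset.sum_range_succ]
    ring

/-- Integral representation of divided difference. -/
lemma berrut_dd_integral {a b : ℝ} {f f' : ℝ → ℝ}
    (hf' : ∀ t ∈ Set.Icc a b, HasDerivWithinAt f (f' t) (Set.Icc a b) t)
    (hc : ContinuousOn f' (Set.Icc a b))
    {z y : ℝ} (hz : z ∈ Set.Ioo a b) (hy : y ∈ Set.Icc a b) :
    f y - f z = (y - z) * ∫ t in (0:ℝ)..1, f' (z + t*(y-z)) := by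
  have hab : a ≤ b := le_trans hz.1.le hz.2.le
  set φ : ℝ → ℝ := fun t => z + t*(y-z) with hφ
  have hφmem : ∀ t ∈ Set.Icc (0:ℝ) 1, φ t ∈ Set.Icc a b := by
    intro t ht
    constructor
    · show a ≤ z + t*(y-z)
      nlinarith [mul_nonneg (sub_nonneg.2 ht.2) (sub_nonneg.2 hz.1.le),
        mul_nonneg ht.1 (sub_nonneg.2 hy.1)]
    · show z + t*(y-z) ≤ b
      nlinarith [mul_nonneg (sub_nonneg.2 ht.2) (sub_nonneg.2 hz.2.le),
        mul_nonneg ht.1 (sub_nonneg.2 hy.2)]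
  have hφint : ∀ t ∈ Set.Ioo (0:ℝ) 1, φ t ∈ Set.Ioo a b := by
    intro t ht
    constructor
    · show a < z + t*(y-z)
      nlinarith [mul_pos (sub_pos.2 ht.2) (sub_pos.2 hz.1),
        mul_nonneg ht.1.le (sub_nonneg.2 hy.1)]
    · show z + t*(y-z) < b
      nlinarith [mul_pos (sub_pos.2 ht.2) (sub_pos.2 hz.2),
        mul_nonneg ht.1.le (sub_nonneg.2 hy.2)]
  have hφcont : Continuous φ := by fun_prop
  have hfc : ContinuousOn f (Set.Icc a b) := fun t ht => ((hf' t ht).differentiableWithinAt).continuousWithinAt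
  have hFc : ContinuousOn (fun t => f (φ t)) (Set.Icc 0 1) :=
    hfc.comp hφcont.continuousOn hφmem
  have hint : IntervalIntegrable (fun t => f' (φ t) * (y-z)) MeasureTheory.volume 0 1 := by
    apply ContinuousOn.intervalIntegrable
    rw [Set.uIcc_of_le (by norm_num : (0:ℝ) ≤ 1)]
    exact (hc.comp hφcont.continuousOn hφmem).mul continuousOn_const
  have hderiv : ∀ t ∈ Set.Ioo (0:ℝ) 1,
      HasDerivWithinAt (fun t => f (φ t)) (f' (φ t) * (y-z)) (Set.Ioi t) t := by
    intro t ht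
    have hmem := hφint t ht
    have hfd : HasDerivAt f (f' (φ t)) (φ t) := by
      have := hf' (φ t) (Set.Ioo_subset_Icc_self hmem)
      exact this.hasDerivAt (Icc_mem_nhds hmem.1 hmem.2)
    have hφd : HasDerivAt φ (y - z) t := by
      exact (((hasDerivAt_id t).mul_const (y-z)).const_add z).congr_deriv (one_mul _)
    exact ((hfd.comp t hφd)).hasDerivWithinAt
  have := intervalIntegral.integral_eq_sub_of_hasDeriv_right_of_le (by norm_num : (0:ℝ) ≤ 1)
    hFc hderiv hint
  have hres : ∫ t in (0:ℝ)..1, f' (φ t) * (y-z) = f y - f z := by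
    rw [this]; simp [hφ]
  rw [← hres, intervalIntegral.integral_mul_const]; ring


lemma berrut_frac_ineq {d0 d1 s : ℝ} (hd0 : 0 < d0) (hd1 : 0 < d1)
    (hs : 0 < s) (hsd : s < d1) :
    1/(d1*(1 + d1/d0)) ≤ 1/s - 1/(s + d0) := by
  have h1 : 1/s - 1/(s+d0) = d0/(s*(s+d0)) := by field_simp; ring
  have h2 : (0:ℝ) < 1 + d1/d0 := by positivity
  rw [h1, div_le_div_iff₀ (by positivity) (by positivity)]
  have h3 : d0*(d1*(1+d1/d0)) = d0*d1 + d1*d1 := by field_simp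
  rw [h3]
  nlinarith [mul_nonneg (sub_nonneg.2 hsd.le) (by linarith : (0:ℝ) ≤ d1 + s),
    mul_nonneg (sub_nonneg.2 hsd.le) hd0.le]

lemma berrut_frac_mono {d0 d1 lam : ℝ} (hd0 : 0 < d0) (hd1 : 0 < d1) (hc : d1/d0 ≤ lam) :
    1/((1+lam)*d1) ≤ 1/(d1*(1 + d1/d0)) := by
  have h2 : (0:ℝ) < 1 + d1/d0 := by positivity
  apply one_div_le_one_div_of_le (by positivity)
  have hm := mul_le_mul_of_nonneg_left hc hd1.le
  nlinarith [hm]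
section BerrutMain

variable {a b : ℝ} {f f' f'' : ℝ → ℝ}

/-- The divided difference `(f y - f z)/(y - z)` is bounded by `M₁`. -/
lemma berrut_dd_bound
    (hf' : ∀ t ∈ Set.Icc a b, HasDerivWithinAt f (f' t) (Set.Icc a b) t)
    (hc : ContinuousOn f' (Set.Icc a b)) {M₁ : ℝ}
    (hM₁ub : ∀ t ∈ Set.Icc a b, |f' t| ≤ M₁)
    {z y : ℝ} (hz : z ∈ Set.Ioo a b) (hy : y ∈ Set.Icc a b) (hyz : y ≠ z) :
    |(f y - f z)/(y - z)| ≤ M₁ := by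
  have hab : a ≤ b := le_trans hz.1.le hz.2.le
  have hrep := berrut_dd_integral hf' hc hz hy
  have hne : y - z ≠ 0 := sub_ne_zero.2 hyz
  have : (f y - f z)/(y - z) = ∫ t in (0:ℝ)..1, f' (z + t*(y-z)) := by
    rw [hrep]; field_simp
  rw [this]
  have hb1 : ∀ t ∈ Set.uIoc (0:ℝ) 1, ‖f' (z + t*(y-z))‖ ≤ M₁ := by
    intro t ht
    rw [Set.uIoc_of_le (by norm_num : (0:ℝ) ≤ 1)] at ht
    have hmem : z + t*(y-z) ∈ Set.Icc a b := by
      constructor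
      · nlinarith [mul_nonneg (sub_nonneg.2 ht.2) (sub_nonneg.2 hz.1.le),
          mul_nonneg ht.1.le (sub_nonneg.2 hy.1)]
      · nlinarith [mul_nonneg (sub_nonneg.2 ht.2) (sub_nonneg.2 hz.2.le),
          mul_nonneg ht.1.le (sub_nonneg.2 hy.2)]
    simpa [Real.norm_eq_abs] using hM₁ub _ hmem
  calc |∫ t in (0:ℝ)..1, f' (z + t*(y-z))|
      ≤ M₁ * |1 - 0| := intervalIntegral.norm_integral_le_of_norm_le_const hb1
    _ = M₁ := by norm_num

/-- Lipschitz-type bound on divided differences. -/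
lemma berrut_dd_lip
    (hf' : ∀ t ∈ Set.Icc a b, HasDerivWithinAt f (f' t) (Set.Icc a b) t)
    (hf'' : ∀ t ∈ Set.Icc a b, HasDerivWithinAt f' (f'' t) (Set.Icc a b) t)
    {M₂ : ℝ} (hM₂ub : ∀ t ∈ Set.Icc a b, |f'' t| ≤ M₂)
    {z u v : ℝ} (hz : z ∈ Set.Ioo a b) (hu : u ∈ Set.Icc a b) (hv : v ∈ Set.Icc a b)
    (huz : u ≠ z) (hvz : v ≠ z) :
    |(f u - f z)/(u - z) - (f v - f z)/(v - z)| ≤ M₂/2 * |u - v| := by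
  have hab : a ≤ b := le_trans hz.1.le hz.2.le
  have hc : ContinuousOn f' (Set.Icc a b) :=
    fun t ht => ((hf'' t ht).differentiableWithinAt).continuousWithinAt
  have hlip : ∀ p ∈ Set.Icc a b, ∀ q ∈ Set.Icc a b, |f' p - f' q| ≤ M₂ * |p - q| := by
    intro p hp q hq
    have := Convex.norm_image_sub_le_of_norm_hasDerivWithin_le hf''
      (fun t ht => by simpa [Real.norm_eq_abs] using hM₂ub t ht) (convex_Icc a b) hq hp
    simpa [Real.norm_eq_abs] using this
  have hmem : ∀ (y : ℝ), y ∈ Set.Icc a b → ∀ t ∈ Set.Icc (0:ℝ) 1,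
      z + t*(y-z) ∈ Set.Icc a b := by
    intro y hy t ht
    constructor
    · nlinarith [mul_nonneg (sub_nonneg.2 ht.2) (sub_nonneg.2 hz.1.le),
        mul_nonneg ht.1 (sub_nonneg.2 hy.1)]
    · nlinarith [mul_nonneg (sub_nonneg.2 ht.2) (sub_nonneg.2 hz.2.le),
        mul_nonneg ht.1 (sub_nonneg.2 hy.2)]
  have hgu : (f u - f z)/(u - z) = ∫ t in (0:ℝ)..1, f' (z + t*(u-z)) := by
    rw [berrut_dd_integral hf' hc hz hu]
    field_simp [sub_ne_zero.2 huz]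
  have hgv : (f v - f z)/(v - z) = ∫ t in (0:ℝ)..1, f' (z + t*(v-z)) := by
    rw [berrut_dd_integral hf' hc hz hv]
    field_simp [sub_ne_zero.2 hvz]
  have hintu : IntervalIntegrable (fun t => f' (z + t*(u-z))) MeasureTheory.volume 0 1 := by
    apply ContinuousOn.intervalIntegrable
    rw [Set.uIcc_of_le (by norm_num : (0:ℝ) ≤ 1)]
    exact hc.comp (by fun_prop) (hmem u hu)
  have hintv : IntervalIntegrable (fun t => f' (z + t*(v-z))) MeasureTheory.volume 0 1 := by
    apply ContinuousOn.intervalIntegrable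
    rw [Set.uIcc_of_le (by norm_num : (0:ℝ) ≤ 1)]
    exact hc.comp (by fun_prop) (hmem v hv)
  rw [hgu, hgv, ← intervalIntegral.integral_sub hintu hintv]
  have hbound : ∀ᵐ t ∂(MeasureTheory.volume.restrict (Set.uIoc (0:ℝ) 1)),
      ‖f' (z + t*(u-z)) - f' (z + t*(v-z))‖ ≤ M₂ * |u - v| * t := by
    rw [Set.uIoc_of_le (by norm_num : (0:ℝ) ≤ 1)]
    refine (MeasureTheory.ae_restrict_iff' measurableSet_Ioc).2 ?_
    filter_upwards with t ht
    have ht' : t ∈ Set.Icc (0:ℝ) 1 := ⟨ht.1.le, ht.2⟩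
    have h1 := hlip _ (hmem u hu t ht') _ (hmem v hv t ht')
    have he : z + t*(u-z) - (z + t*(v-z)) = t * (u - v) := by ring
    rw [Real.norm_eq_abs]
    calc |f' (z + t*(u-z)) - f' (z + t*(v-z))| ≤ M₂ * |z + t*(u-z) - (z + t*(v-z))| := h1
      _ = M₂ * |u - v| * t := by
          rw [he, abs_mul, abs_of_nonneg ht.1.le]; ring
  have hGint : IntervalIntegrable (fun t => M₂ * |u - v| * t) MeasureTheory.volume 0 1 := by
    apply ContinuousOn.intervalIntegrable; fun_prop
  have := intervalIntegral.norm_integral_le_abs_of_norm_le hbound hGint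
  rw [Real.norm_eq_abs] at this
  refine le_trans this ?_
  have : ∫ t in (0:ℝ)..1, M₂ * |u - v| * t = M₂ * |u - v| * (1/2) := by
    rw [intervalIntegral.integral_const_mul, integral_id]; norm_num
  rw [this]
  have hM₂0 : 0 ≤ M₂ := le_trans (abs_nonneg _) (hM₂ub a ⟨le_rfl, hab⟩)
  rw [abs_of_nonneg (by nlinarith [abs_nonneg (u-v)] : (0:ℝ) ≤ M₂ * |u - v| * (1/2))]
  ring_nf
  rfl


theorem berrut_interpolation_error
    (n : ℕ) (hn : 3 ≤ n) (a b : ℝ) (x : ℕ → ℝ)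
    (ha : x 0 = a) (hb : x n = b)
    (hmono : ∀ i, i < n → x i < x (i + 1))
    (f f' f'' : ℝ → ℝ)
    (hf' : ∀ t ∈ Set.Icc a b, HasDerivWithinAt f (f' t) (Set.Icc a b) t)
    (hf'' : ∀ t ∈ Set.Icc a b, HasDerivWithinAt f' (f'' t) (Set.Icc a b) t)
    (hcont : ContinuousOn f'' (Set.Icc a b))
    (h lam M₁ M₂ : ℝ)
    (hh : h = (Finset.range n).sup' (Finset.nonempty_range_iff.mpr (by omega))
      (fun i => x (i + 1) - x i))
    (hlam : lam = (Finset.Icc 1 (n - 2)).sup' (Finset.nonempty_Icc.mpr (by omega))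
      (fun i => min ((x (i + 1) - x i) / (x i - x (i - 1)))
                    ((x (i + 1) - x i) / (x (i + 2) - x (i + 1)))))
    (hM₁mem : M₁ ∈ (fun t => |f' t|) '' Set.Icc a b)
    (hM₁ub : ∀ t ∈ Set.Icc a b, |f' t| ≤ M₁)
    (hM₂mem : M₂ ∈ (fun t => |f'' t|) '' Set.Icc a b)
    (hM₂ub : ∀ t ∈ Set.Icc a b, |f'' t| ≤ M₂) :
    ∀ z ∈ Set.Icc a b, (∀ i ≤ n, z ≠ x i) →
      (Odd n →
        |(∑ i ∈ Finset.range (n + 1), ((-1 : ℝ) ^ i / (z - x i)) * f (x i)) /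
            (∑ j ∈ Finset.range (n + 1), (-1 : ℝ) ^ j / (z - x j)) - f z| ≤
          h * (1 + lam) * (b - a) * M₂ / 2) ∧
      (Even n →
        |(∑ i ∈ Finset.range (n + 1), ((-1 : ℝ) ^ i / (z - x i)) * f (x i)) /
            (∑ j ∈ Finset.range (n + 1), (-1 : ℝ) ^ j / (z - x j)) - f z| ≤
          h * (1 + lam) * ((b - a) * M₂ / 2 + M₁)) := by
  intro z hz hzne
  -- ordering facts
  have hle : ∀ i j, i ≤ j → j ≤ n → x i ≤ x j := by
    intro i j hij
    induction hij with
    | refl => intro _; exact le_rfl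
    | @step m hm ih => intro hmn; exact le_trans (ih (by omega)) (hmono m (by omega)).le
  have hltx : ∀ i j, i < j → j ≤ n → x i < x j := by
    intro i j hij hjn
    exact lt_of_lt_of_le (hmono i (by omega)) (hle (i+1) j (by omega) hjn)
  have hab : a < b := by rw [← ha, ← hb]; exact hltx 0 n (by omega) le_rfl
  have hmem : ∀ i, i ≤ n → x i ∈ Set.Icc a b := by
    intro i hi
    exact ⟨ha ▸ hle 0 i (by omega) hi, hb ▸ hle i n hi le_rfl⟩
  have hza : a < z := lt_of_le_of_ne hz.1 (fun e => hzne 0 (by omega) (by rw [← e, ha]))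
  have hzb : z < b := lt_of_le_of_ne hz.2 (fun e => hzne n le_rfl (by rw [e, hb]))
  have hzoo : z ∈ Set.Ioo a b := ⟨hza, hzb⟩
  -- locate z between two nodes
  obtain ⟨J, hJn, hJ1, hJ2⟩ : ∃ J, J < n ∧ x J < z ∧ z < x (J+1) := by
    classical
    set T := (Finset.range (n+1)).filter (fun i => x i < z) with hT
    have h0T : (0:ℕ) ∈ T := by
      rw [hT]; simp only [Finset.mem_filter, Finset.mem_range]
      exact ⟨by omega, by rw [ha]; exact hza⟩
    have hTne : T.Nonempty := ⟨0, h0T⟩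
    set J := T.max' hTne with hJ
    have hmax : J < n + 1 ∧ x J < z := by
      have hmm : J ∈ T := T.max'_mem hTne
      rw [hT, Finset.mem_filter, Finset.mem_range] at hmm
      exact hmm
    have hJlt : J < n := by
      rcases Nat.lt_or_ge J n with h' | h'
      · exact h'
      · exfalso
        have he : J = n := by omega
        have := hmax.2
        rw [he, hb] at this
        exact absurd this (not_lt.2 hz.2)
    refine ⟨J, hJlt, hmax.2, ?_⟩
    by_contra hcon
    push_neg at hcon
    have hlt' : x (J+1) < z := lt_of_le_of_ne hcon (fun e => hzne _ (by omega) e.symm)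
    have hmem' : J + 1 ∈ T := by
      rw [hT]; simp only [Finset.mem_filter, Finset.mem_range]
      exact ⟨by omega, hlt'⟩
    have := T.le_max' _ hmem'
    omega
    -- abbreviations
  have hzsub : ∀ i, i ≤ n → z - x i ≠ 0 := fun i hi => sub_ne_zero.2 (hzne i hi)
  have hxz : ∀ i, i ≤ n → x i - z ≠ 0 := fun i hi => sub_ne_zero.2 (fun e => hzne i hi e.symm)
  have hfc' : ContinuousOn f' (Set.Icc a b) :=
    fun t ht => ((hf'' t ht).differentiableWithinAt).continuousWithinAt
  obtain ⟨t₂, ht₂, ht₂e⟩ := hM₂mem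
  have hM₂0 : 0 ≤ M₂ := ht₂e ▸ abs_nonneg _
  obtain ⟨t₁, ht₁, ht₁e⟩ := hM₁mem
  have hM₁0 : 0 ≤ M₁ := ht₁e ▸ abs_nonneg _
  have hd1 : 0 < x (J+1) - x J := sub_pos.2 (hmono J hJn)
  -- lam and h facts
  have hlam0 : 0 ≤ lam := by
    have h1mem : (1:ℕ) ∈ Finset.Icc 1 (n-2) := Finset.mem_Icc.2 ⟨le_rfl, by omega⟩
    have hle1 := hlam ▸ Finset.le_sup'
      (fun i => min ((x (i + 1) - x i) / (x i - x (i - 1)))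
        ((x (i + 1) - x i) / (x (i + 2) - x (i + 1)))) h1mem
    have hp1 : 0 < (x 2 - x 1) / (x 1 - x 0) :=
      div_pos (sub_pos.2 (hmono 1 (by omega))) (sub_pos.2 (hmono 0 (by omega)))
    have hp2 : 0 < (x 2 - x 1) / (x 3 - x 2) :=
      div_pos (sub_pos.2 (hmono 1 (by omega))) (sub_pos.2 (hmono 2 (by omega)))
    simp only [show (1:ℕ) - 1 = 0 from rfl] at hle1
    norm_num at hle1
    rcases hle1 with h' | h' <;> linarith
  have hd1h : x (J+1) - x J ≤ h := by
    rw [hh]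
    exact Finset.le_sup' (fun i => x (i + 1) - x i) (Finset.mem_range.2 hJn)
  have hh0 : 0 < h := lt_of_lt_of_le hd1 hd1h
  -- the denominator and its decomposition
  set D := ∑ i ∈ Finset.range (n + 1), (-1 : ℝ) ^ i / (z - x i) with hD
  set u : ℕ → ℝ := fun k => 1/(z - x (J - k)) with hu
  set v : ℕ → ℝ := fun k => 1/(x (J+1+k) - z) with hv
  have hsq : ∀ m : ℕ, (-1:ℝ)^m * (-1:ℝ)^m = 1 := by
    intro m; rw [← pow_add]; exact Even.neg_one_pow ⟨m, rfl⟩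
  have hsplit : D = (∑ i ∈ Finset.range (J+1), (-1:ℝ)^i/(z - x i))
      + ∑ i ∈ Finset.range (n-J), (-1:ℝ)^(J+1+i)/(z - x (J+1+i)) := by
    rw [hD, show n+1 = (J+1)+(n-J) from by omega,
      Finset.sum_range_add (fun i => (-1:ℝ)^i/(z - x i)) (J+1) (n-J)]
  have hA : (-1:ℝ)^J * (∑ i ∈ Finset.range (J+1), (-1:ℝ)^i/(z - x i))
      = ∑ k ∈ Finset.range (J+1), (-1:ℝ)^k * u k := by
    rw [← Finset.sum_range_reflect (fun i => (-1:ℝ)^i/(z - x i)) (J+1), Finset.mul_sum]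
    refine Finset.sum_congr rfl (fun k hk => ?_)
    rw [Finset.mem_range] at hk
    have h1 : J + 1 - 1 - k = J - k := by omega
    simp only [h1, hu]
    have hsplitJ : (-1:ℝ)^J = (-1:ℝ)^(J-k) * (-1:ℝ)^k := by
      rw [← pow_add]; congr 1; omega
    rw [hsplitJ]
    simp only [one_div, div_eq_mul_inv]
    linear_combination ((-1:ℝ)^k * (z - x (J - k))⁻¹) * hsq (J-k)
  have hB : (-1:ℝ)^J * (∑ i ∈ Finset.range (n-J), (-1:ℝ)^(J+1+i)/(z - x (J+1+i)))
      = ∑ k ∈ Finset.range (n-J), (-1:ℝ)^k * v k := by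
    rw [Finset.mul_sum]
    refine Finset.sum_congr rfl (fun k hk => ?_)
    simp only [hv]
    have hpow : (-1:ℝ)^(J+1+k) = (-1:ℝ)^J * (-1) * (-1:ℝ)^k := by
      rw [pow_add, pow_add, pow_one]
    have hzx : z - x (J+1+k) = -(x (J+1+k) - z) := by ring
    rw [hpow, hzx, div_neg]
    simp only [one_div, div_eq_mul_inv]
    linear_combination ((-1:ℝ)^k * (x (J+1+k) - z)⁻¹) * hsq J
  -- positivity and monotonicity of u and v
  have hupos : ∀ k, k ≤ J → 0 < z - x (J - k) := by
    intro k hk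
    have : x (J - k) ≤ x J := hle (J-k) J (by omega) (by omega)
    linarith
  have hu_nn : ∀ k, k ≤ J → 0 ≤ u k := by
    intro k hk; exact le_of_lt (one_div_pos.2 (hupos k hk))
  have hu_dec : ∀ k, k + 1 ≤ J → u (k+1) ≤ u k := by
    intro k hk
    simp only [hu]
    apply one_div_le_one_div_of_le (hupos k (by omega))
    have : x (J - (k+1)) ≤ x (J - k) := hle _ _ (by omega) (by omega)
    linarith
  have hvpos : ∀ k, k ≤ n - J - 1 → 0 < x (J+1+k) - z := by
    intro k hk
    have : x (J+1) ≤ x (J+1+k) := hle _ _ (by omega) (by omega)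
    linarith
  have hv_nn : ∀ k, k ≤ n - J - 1 → 0 ≤ v k := by
    intro k hk; simp only [hv]
    exact le_of_lt (one_div_pos.2 (hvpos k hk))
  have hv_dec : ∀ k, k + 1 ≤ n - J - 1 → v (k+1) ≤ v k := by
    intro k hk
    simp only [hv]
    apply one_div_le_one_div_of_le (hvpos k (by omega))
    have : x (J+1+k) ≤ x (J+1+(k+1)) := hle _ _ (by omega) (by omega)
    linarith
  have hA0 : 0 ≤ ∑ k ∈ Finset.range (J+1), (-1:ℝ)^k * u k :=
    berrut_alt_sum_nonneg J u hu_dec hu_nn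
  have hB0 : 0 ≤ ∑ k ∈ Finset.range (n-J), (-1:ℝ)^k * v k := by
    rw [show n - J = (n-J-1)+1 from by omega]
    exact berrut_alt_sum_nonneg (n-J-1) v hv_dec hv_nn
    -- denominator lower bound
  have hDlow : 1/((1+lam)*(x (J+1) - x J)) ≤ (-1:ℝ)^J * D := by
    have hDsum : (-1:ℝ)^J * D = (∑ k ∈ Finset.range (J+1), (-1:ℝ)^k * u k)
        + ∑ k ∈ Finset.range (n-J), (-1:ℝ)^k * v k := by
      rw [hsplit, mul_add, hA, hB]
    rw [hDsum]
    by_cases hJ0 : J = 0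
    · -- z in the first subinterval
      subst hJ0
      have hAval : ∑ k ∈ Finset.range (0+1), (-1:ℝ)^k * u k = 1/(z - x 0) := by
        simp [hu]
      rw [hAval]
      have hzx0 : 0 < z - x 0 := by rw [ha]; linarith
      have hkey : 1/((1+lam)*(x (0+1) - x 0)) ≤ 1/(z - x 0) := by
        apply one_div_le_one_div_of_le hzx0
        linarith [mul_nonneg hlam0 hd1.le, hJ2]
      linarith [hB0]
    · by_cases hJn1 : J = n - 1
      · -- z in the last subinterval
        have hnJ : n - J = 1 := by omega
        have hBval : ∑ k ∈ Finset.range (n-J), (-1:ℝ)^k * v k = 1/(x (J+1) - z) := by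
          rw [hnJ]; simp [hv]
        rw [hBval]
        have hzx0 : 0 < x (J+1) - z := by linarith
        have hkey : 1/((1+lam)*(x (J+1) - x J)) ≤ 1/(x (J+1) - z) := by
          apply one_div_le_one_div_of_le hzx0
          linarith [mul_nonneg hlam0 hd1.le, hJ1]
        linarith [hA0]
      · -- interior case: 1 ≤ J ≤ n-2
        have hJ1n : 1 ≤ J := by omega
        have hJn2 : J ≤ n - 2 := by omega
        have hd0 : 0 < x J - x (J-1) := sub_pos.2 (hltx (J-1) J (by omega) (by omega))
        have hd2 : 0 < x (J+2) - x (J+1) := sub_pos.2 (hmono (J+1) (by omega))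
        set d0 := x J - x (J-1) with hd0def
        set d1 := x (J+1) - x J with hd1def
        set d2 := x (J+2) - x (J+1) with hd2def
        have hJmem : J ∈ Finset.Icc 1 (n-2) := Finset.mem_Icc.2 ⟨hJ1n, hJn2⟩
        have hminlam : min (d1/d0) (d1/d2) ≤ lam := by
          have := hlam ▸ Finset.le_sup'
            (fun i => min ((x (i + 1) - x i) / (x i - x (i - 1)))
              ((x (i + 1) - x i) / (x (i + 2) - x (i + 1)))) hJmem
          exact this
        have hAge : u 0 - u 1 ≤ ∑ k ∈ Finset.range (J+1), (-1:ℝ)^k * u k :=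
          berrut_alt_sum_ge J hJ1n u hu_dec hu_nn
        have hBge : v 0 - v 1 ≤ ∑ k ∈ Finset.range (n-J), (-1:ℝ)^k * v k := by
          rw [show n - J = (n-J-1)+1 from by omega]
          exact berrut_alt_sum_ge (n-J-1) (by omega) v hv_dec hv_nn
        have hu0 : u 0 = 1/(z - x J) := by simp [hu]
        have hu1 : u 1 = 1/(z - x (J-1)) := by simp [hu]
        have hv0 : v 0 = 1/(x (J+1) - z) := by simp [hv]
        have hv1 : v 1 = 1/(x (J+2) - z) := rfl
        have hs0 : 0 < z - x J := sub_pos.2 hJ1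
        set s := z - x J with hsdef
        have hsd1 : s < d1 := by rw [hsdef, hd1def]; linarith
        have hzJ1 : z - x (J-1) = s + d0 := by rw [hsdef, hd0def]; ring
        have ht0 : 0 < x (J+1) - z := sub_pos.2 hJ2
        set t := x (J+1) - z with htdef
        have htd1 : t < d1 := by rw [htdef, hd1def]; linarith [hJ1]
        have hzJ2 : x (J+2) - z = t + d2 := by rw [htdef, hd2def]; ring
        -- the two candidate lower bounds
        have hu01 : 1/(d1*(1 + d1/d0)) ≤ u 0 - u 1 := by
          rw [hu0, hu1, hzJ1]
          exact berrut_frac_ineq hd0 hd1 hs0 hsd1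
        have hv01 : 1/(d1*(1 + d1/d2)) ≤ v 0 - v 1 := by
          rw [hv0, hv1, hzJ2]
          exact berrut_frac_ineq hd2 hd1 ht0 htd1
        rcases le_total (d1/d0) (d1/d2) with hmin | hmin
        · have hcase : d1/d0 ≤ lam := by
            rw [min_eq_left hmin] at hminlam; exact hminlam
          have hfin : 1/((1+lam)*d1) ≤ 1/(d1*(1 + d1/d0)) :=
            berrut_frac_mono hd0 hd1 hcase
          linarith
        · have hcase : d1/d2 ≤ lam := by
            rw [min_eq_right hmin] at hminlam; exact hminlam
          have hfin : 1/((1+lam)*d1) ≤ 1/(d1*(1 + d1/d2)) :=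
            berrut_frac_mono hd2 hd1 hcase
          linarith
    -- consequences for |D|
  have hT0pos : 0 < 1/((1+lam)*(x (J+1) - x J)) :=
    one_div_pos.2 (mul_pos (by linarith) hd1)
  have habsD : 1/((1+lam)*(x (J+1) - x J)) ≤ |D| := by
    refine le_trans hDlow (le_trans (le_abs_self _) ?_)
    rw [abs_mul, abs_pow, abs_neg, abs_one, one_pow, one_mul]
  have hDne : D ≠ 0 := by
    intro h0
    rw [h0, abs_zero] at habsD
    linarith
  have hinvD : 1/|D| ≤ (1+lam)*h := by
    have h1 : 1/|D| ≤ (1+lam)*(x (J+1) - x J) := by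
      have h2 := one_div_le_one_div_of_le hT0pos habsD
      rwa [one_div_one_div] at h2
    exact le_trans h1 (mul_le_mul_of_nonneg_left hd1h (by linarith))
  -- numerator rewrite
  set S := ∑ i ∈ Finset.range (n+1), (-1:ℝ)^i * ((f (x i) - f z)/(x i - z)) with hS
  have hNum : (∑ i ∈ Finset.range (n + 1), ((-1:ℝ)^i/(z - x i)) * f (x i)) - f z * D = -S := by
    rw [hS, hD, Finset.mul_sum, ← Finset.sum_sub_distrib, ← Finset.sum_neg_distrib]
    refine Finset.sum_congr rfl (fun i hi => ?_)
    rw [Finset.mem_range] at hi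
    have h1 : z - x i ≠ 0 := hzsub i (by omega)
    have h2 : x i - z ≠ 0 := hxz i (by omega)
    field_simp
    ring
  have hErr : (∑ i ∈ Finset.range (n + 1), ((-1:ℝ)^i/(z - x i)) * f (x i)) / D - f z
      = -S / D := by
    rw [← hNum, sub_div, mul_div_assoc, div_self hDne, mul_one]
  have habs2 : |(∑ i ∈ Finset.range (n + 1), ((-1:ℝ)^i/(z - x i)) * f (x i)) / D - f z|
      = |S|/|D| := by
    rw [hErr, abs_div, abs_neg]
  have hmain : |(∑ i ∈ Finset.range (n + 1), ((-1:ℝ)^i/(z - x i)) * f (x i)) / D - f z|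
      ≤ |S| * ((1+lam)*h) := by
    rw [habs2, div_eq_mul_one_div]
    exact mul_le_mul_of_nonneg_left hinvD (abs_nonneg _)
  -- numerator bounds
  have hpair : ∀ k, 2*k+1 ≤ n →
      |(f (x (2*k)) - f z)/(x (2*k) - z) - (f (x (2*k+1)) - f z)/(x (2*k+1) - z)|
        ≤ M₂/2 * (x (2*k+1) - x (2*k)) := by
    intro k hk
    have h1 := berrut_dd_lip hf' hf'' hM₂ub hzoo (hmem (2*k) (by omega))
      (hmem (2*k+1) (by omega)) (fun e => hzne (2*k) (by omega) e.symm)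
      (fun e => hzne (2*k+1) (by omega) e.symm)
    have h2 : |x (2*k) - x (2*k+1)| = x (2*k+1) - x (2*k) := by
      rw [abs_sub_comm, abs_of_nonneg (by linarith [hmono (2*k) (by omega : 2*k < n)])]
    rw [h2] at h1
    exact h1
  have hgMi : ∀ i, i ≤ n → |(f (x i) - f z)/(x i - z)| ≤ M₁ := fun i hi =>
    berrut_dd_bound hf' hfc' hM₁ub hzoo (hmem i hi) (fun e => hzne i hi e.symm)
  have hgapsum : ∀ m : ℕ, 2*m ≤ n+1 →
      ∑ k ∈ Finset.range m, (x (2*k+1) - x (2*k)) ≤ b - a := by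
    intro m hm
    have htel : ∑ i ∈ Finset.range n, (x (i+1) - x i) = b - a := by
      rw [Finset.sum_range_sub (fun i => x i) n, ha, hb]
    calc ∑ k ∈ Finset.range m, (x (2*k+1) - x (2*k))
        = ∑ i ∈ (Finset.range m).image (fun k => 2*k), (x (i+1) - x i) := by
          rw [Finset.sum_image (fun p _ q _ e => by omega)]
      _ ≤ ∑ i ∈ Finset.range n, (x (i+1) - x i) := by
          apply Finset.sum_le_sum_of_subset_of_nonneg
          · intro i hi
            simp only [Finset.mem_image, Finset.mem_range] at hi ⊢
            obtain ⟨k, hk, rfl⟩ := hi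
            omega
          · intro i hi _
            exact sub_nonneg.2 (hmono i (Finset.mem_range.1 hi)).le
      _ = b - a := htel
  have hSpair : ∀ m : ℕ, 2*m ≤ n+1 →
      |∑ i ∈ Finset.range (2*m), (-1:ℝ)^i * ((f (x i) - f z)/(x i - z))| ≤ (b-a)*M₂/2 := by
    intro m hm
    rw [berrut_sum_pair m (fun i => (-1:ℝ)^i * ((f (x i) - f z)/(x i - z)))]
    have hterm : ∀ k ∈ Finset.range m,
        |(-1:ℝ)^(2*k) * ((f (x (2*k)) - f z)/(x (2*k) - z))
          + (-1:ℝ)^(2*k+1) * ((f (x (2*k+1)) - f z)/(x (2*k+1) - z))|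
          ≤ M₂/2 * (x (2*k+1) - x (2*k)) := by
      intro k hk
      rw [Finset.mem_range] at hk
      have he : (-1:ℝ)^(2*k) = 1 := Even.neg_one_pow ⟨k, by omega⟩
      have ho : (-1:ℝ)^(2*k+1) = -1 := Odd.neg_one_pow ⟨k, by omega⟩
      rw [he, ho, one_mul, neg_one_mul, ← sub_eq_add_neg]
      exact hpair k (by omega)
    calc |∑ k ∈ Finset.range m, ((-1:ℝ)^(2*k) * ((f (x (2*k)) - f z)/(x (2*k) - z))
          + (-1:ℝ)^(2*k+1) * ((f (x (2*k+1)) - f z)/(x (2*k+1) - z)))|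
        ≤ ∑ k ∈ Finset.range m, |(-1:ℝ)^(2*k) * ((f (x (2*k)) - f z)/(x (2*k) - z))
          + (-1:ℝ)^(2*k+1) * ((f (x (2*k+1)) - f z)/(x (2*k+1) - z))| :=
          Finset.abs_sum_le_sum_abs _ _
      _ ≤ ∑ k ∈ Finset.range m, M₂/2 * (x (2*k+1) - x (2*k)) := Finset.sum_le_sum hterm
      _ = M₂/2 * ∑ k ∈ Finset.range m, (x (2*k+1) - x (2*k)) := by rw [Finset.mul_sum]
      _ ≤ M₂/2 * (b - a) := mul_le_mul_of_nonneg_left (hgapsum m hm) (by linarith)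
      _ = (b-a)*M₂/2 := by ring
  have hlamh : (0:ℝ) ≤ (1+lam)*h := mul_nonneg (by linarith) hh0.le
  constructor
  · -- odd case
    intro hodd
    obtain ⟨m, hm⟩ := hodd
    have hSb : |S| ≤ (b-a)*M₂/2 := by
      have h1 := hSpair (m+1) (by omega)
      rw [hS, show n+1 = 2*(m+1) from by omega]
      exact h1
    refine le_trans hmain ?_
    calc |S| * ((1+lam)*h) ≤ ((b-a)*M₂/2) * ((1+lam)*h) :=
        mul_le_mul_of_nonneg_right hSb hlamh
      _ = h * (1+lam) * (b-a) * M₂ / 2 := by ring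
  · -- even case
    intro heven
    obtain ⟨m, hm⟩ := heven
    have hn2m : n = 2*m := by omega
    have hsplitS : S = (∑ i ∈ Finset.range (2*m), (-1:ℝ)^i * ((f (x i) - f z)/(x i - z)))
        + (-1:ℝ)^(2*m) * ((f (x (2*m)) - f z)/(x (2*m) - z)) := by
      rw [hS, show n+1 = 2*m+1 from by omega, Finset.sum_range_succ]
    have hlast : |(f (x (2*m)) - f z)/(x (2*m) - z)| ≤ M₁ := hgMi (2*m) (by omega)
    have hSb : |S| ≤ (b-a)*M₂/2 + M₁ := by
      rw [hsplitS]
      have h1 := hSpair m (by omega)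
      have he : (-1:ℝ)^(2*m) = 1 := Even.neg_one_pow ⟨m, by omega⟩
      calc |(∑ i ∈ Finset.range (2*m), (-1:ℝ)^i * ((f (x i) - f z)/(x i - z)))
            + (-1:ℝ)^(2*m) * ((f (x (2*m)) - f z)/(x (2*m) - z))|
          ≤ |∑ i ∈ Finset.range (2*m), (-1:ℝ)^i * ((f (x i) - f z)/(x i - z))|
            + |(-1:ℝ)^(2*m) * ((f (x (2*m)) - f z)/(x (2*m) - z))| := abs_add_le _ _
        _ ≤ (b-a)*M₂/2 + M₁ := by
            rw [he, one_mul]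
            exact add_le_add h1 hlast
    refine le_trans hmain ?_
    calc |S| * ((1+lam)*h) ≤ ((b-a)*M₂/2 + M₁) * ((1+lam)*h) :=
        mul_le_mul_of_nonneg_right hSb hlamh
      _ = h * (1+lam) * ((b-a)*M₂/2 + M₁) := by ring
end BerrutMain
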